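/- Every 2×2 matrix A whose rows have ℓ² norm at most 1 satisfies β(A) ≤ √2, i.e., Σ_{x ∈ {-1,1}²} ‖Ax‖_∞ ≤ 4√2. -/
import Mathlib


open Matrix Finset

/-- The ±1 vector associated to a Boolean sign pattern. -/
noncomputable def signVec {n : ℕ} (σ : Fin n → Bool) : Fin n → ℝ :=
  fun i => if σ i then 1 else -1

/-- The ℓ^∞ norm (maximum absolute coordinate) of a vector. -/
noncomputable def supNorm {n : ℕ} (v : Fin n → ℝ) : ℝ := ⨆ i, |v i|

/-- β(A) = 2^{-n} Σ_{x ∈ {-1,1}^n} ‖Ax‖_∞. -/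
noncomputable def beta {n : ℕ} (A : Matrix (Fin n) (Fin n) ℝ) : ℝ :=
  (2 ^ n : ℝ)⁻¹ * ∑ σ : Fin n → Bool, supNorm (A.mulVec (signVec σ))

lemma abs_add_abs_le_sqrt_two {a b : ℝ} (h : a ^ 2 + b ^ 2 ≤ 1) :
    |a| + |b| ≤ Real.sqrt 2 := by
  have h2 : (|a| + |b|) ^ 2 ≤ 2 := by
    nlinarith [sq_nonneg (|a| - |b|), sq_abs a, sq_abs b]
  calc |a| + |b| = Real.sqrt ((|a| + |b|) ^ 2) := (Real.sqrt_sq (by positivity)).symm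
    _ ≤ Real.sqrt 2 := Real.sqrt_le_sqrt h2

theorem beta_le_sqrt_two_of_rows_le_one (A : Matrix (Fin 2) (Fin 2) ℝ)
    (hrows : ∀ i, ∑ j, A i j ^ 2 ≤ 1) :
    (∑ σ : Fin 2 → Bool, supNorm (A.mulVec (signVec σ))) ≤ 4 * Real.sqrt 2 := by
  have key : ∀ σ : Fin 2 → Bool, supNorm (A.mulVec (signVec σ)) ≤ Real.sqrt 2 := by
    intro σ
    apply ciSup_le
    intro i
    have hr := hrows i
    rw [Fin.sum_univ_two] at hr
    have hs : ∀ j, |signVec σ j| = 1 := by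
      intro j; unfold signVec; split <;> simp
    have : |A.mulVec (signVec σ) i| ≤ |A i 0| + |A i 1| := by
      simp only [Matrix.mulVec, dotProduct, Fin.sum_univ_two]
      calc |A i 0 * signVec σ 0 + A i 1 * signVec σ 1|
          ≤ |A i 0 * signVec σ 0| + |A i 1 * signVec σ 1| := abs_add_le _ _
        _ = |A i 0| + |A i 1| := by rw [abs_mul, abs_mul, hs 0, hs 1, mul_one, mul_one]
    exact this.trans (abs_add_abs_le_sqrt_two hr)
  calc (∑ σ : Fin 2 → Bool, supNorm (A.mulVec (signVec σ)))
      ≤ ∑ _σ : Fin 2 → Bool, Real.sqrt 2 := Finset.sum_le_sum fun σ _ => key σ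
    _ = 4 * Real.sqrt 2 := by simp [Finset.card_univ]
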